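/- Fix integers r, s ≥ 1 and t ≥ 2, and let ρ ∈ Par_{r,s} be a t-core with a_i = a_i(ρ) for 0 ≤ i ≤ t−1. Then, as polynomials in q, Σ_{λ ∈ Par_{r,s}, core_t(λ) = ρ} q^{|λ|} = q^{|ρ|} · ∏_{i=0}^{t−1} [n_i choose a_i]_{q^t}, where [n choose a]_Q denotes the Gaussian binomial coefficient evaluated at Q = q^t. -/

import Mathlib

open Finset

/-- Partitions in the `r × s` rectangle: weakly decreasing `r`-tuples with parts at most `s`. -/
def IsRectPartition (r s : ℕ) (lam : Fin r → ℕ) : Prop :=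
  (∀ i j : Fin r, i ≤ j → lam j ≤ lam i) ∧ ∀ i, lam i ≤ s

/-- The beta-set `β(λ) = {λ_i + r − i : 1 ≤ i ≤ r}` (with 0-indexed `i`). -/
def betaSet (r : ℕ) (lam : Fin r → ℕ) : Finset ℕ :=
  Finset.image (fun i : Fin r => lam i + (r - 1 - (i : ℕ))) Finset.univ

/-- `λ` is a `t`-core: for every `b ∈ β(λ)` with `b ≥ t`, also `b − t ∈ β(λ)`. -/
def IsTCore (r t : ℕ) (lam : Fin r → ℕ) : Prop :=
  ∀ b ∈ betaSet r lam, t ≤ b → b - t ∈ betaSet r lam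

/-- `n_i = ⌊(r+s+t−1−i)/t⌋`. -/
def nres (r s t i : ℕ) : ℕ := (r + s + t - 1 - i) / t

/-- `a_i(λ) = #{b ∈ β(λ) : b ≡ i (mod t)}`. -/
def aCount (r t : ℕ) (lam : Fin r → ℕ) (i : ℕ) : ℕ :=
  ((betaSet r lam).filter fun b => b % t = i).card

/-- The justification `J(λ)`: in each residue class `i` mod `t`, the `a_i(λ)` smallest
nonnegative integers congruent to `i`. -/
def justification (r t : ℕ) (lam : Fin r → ℕ) : Finset ℕ :=
  (Finset.range t).biUnion fun i =>
    (Finset.range (aCount r t lam i)).image fun m => i + m * t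

/-- The size of the `t`-core of `λ`: `Σ_{b ∈ J(λ)} b − r(r−1)/2`. -/
def coreSize (r t : ℕ) (lam : Fin r → ℕ) : ℕ :=
  (∑ b ∈ justification r t lam, b) - r * (r - 1) / 2

/-- The Gaussian binomial coefficient `[n choose a]_Q = ∏_{j=1}^{a} (1 − Q^{n−a+j})/(1 − Q^j)`,
as a rational function in `Q`. -/
noncomputable def gaussBinom (Q : RatFunc ℚ) (n a : ℕ) : RatFunc ℚ :=
  ∏ j ∈ Finset.Icc 1 a, (1 - Q ^ (n - a + j)) / (1 - Q ^ j)



section Gauss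
variable {K : Type*} [Field K] (Q : K)

noncomputable def gbProd (Q : K) (m a : ℕ) : K := ∏ j ∈ Finset.range a, (1 - Q ^ (m + 1 + j))

lemma gbProd_succ_top (m a : ℕ) :
    gbProd Q m (a + 1) = gbProd Q m a * (1 - Q ^ (m + 1 + a)) := by
  rw [gbProd, Finset.prod_range_succ]; rfl

lemma gbProd_succ_bot (m a : ℕ) :
    gbProd Q m (a + 1) = gbProd Q (m + 1) a * (1 - Q ^ (m + 1)) := by
  rw [gbProd, Finset.prod_range_succ', gbProd]
  congr 1
  · apply Finset.prod_congr rfl; intro j _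
    have : m + 1 + (j + 1) = m + 1 + 1 + j := by omega
    rw [this]

lemma gbProd_ne_zero (hQ : ∀ j : ℕ, 1 ≤ j → Q ^ j ≠ 1) (m a : ℕ) : gbProd Q m a ≠ 0 := by
  apply Finset.prod_ne_zero_iff.2
  intro j _ h
  exact hQ (m + 1 + j) (by omega) (sub_eq_zero.mp h).symm

noncomputable def sPow (Q : K) (n a : ℕ) : K :=
  ∑ S ∈ Finset.powersetCard a (Finset.range n), Q ^ (∑ b ∈ S, b)

lemma sPow_zero (n : ℕ) : sPow Q n 0 = 1 := by simp [sPow]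

lemma sPow_of_lt {n a : ℕ} (h : n < a) : sPow Q n a = 0 := by
  rw [sPow, Finset.powersetCard_eq_empty.2 (by simpa using h), Finset.sum_empty]

lemma sPow_pascal (n a : ℕ) :
    sPow Q (n + 1) (a + 1) = sPow Q n (a + 1) + Q ^ n * sPow Q n a := by
  have hn : n ∉ Finset.range n := by simp
  rw [sPow, Finset.range_add_one, Finset.powersetCard_succ_insert hn, Finset.sum_union]
  · congr 1
    rw [Finset.sum_image, sPow, Finset.mul_sum]
    · apply Finset.sum_congr rfl
      intro S hS
      have hnS : n ∉ S := fun h => hn ((Finset.mem_powersetCard.1 hS).1 h)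
      rw [Finset.sum_insert hnS, pow_add]
    · intro S hS T hT hST
      have hnS : n ∉ S := fun h => hn ((Finset.mem_powersetCard.1 hS).1 h)
      have hnT : n ∉ T := fun h => hn ((Finset.mem_powersetCard.1 hT).1 h)
      rw [← Finset.erase_insert hnS, ← Finset.erase_insert hnT, hST]
  · rw [Finset.disjoint_right]
    intro S hS hS'
    obtain ⟨T, hT, rfl⟩ := Finset.mem_image.1 hS
    exact hn ((Finset.mem_powersetCard.1 hS').1 (Finset.mem_insert_self n T))

lemma sPow_eq (hQ : ∀ j : ℕ, 1 ≤ j → Q ^ j ≠ 1) :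
    ∀ n a : ℕ, a ≤ n →
      sPow Q n a = Q ^ (∑ i ∈ Finset.range a, i) * gbProd Q (n - a) a / gbProd Q 0 a := by
  intro n
  induction n with
  | zero =>
    intro a ha
    interval_cases a
    simp [sPow_zero, gbProd]
  | succ n ih =>
    intro a ha
    match a with
    | 0 => simp [sPow_zero, gbProd]
    | b + 1 =>
      rw [sPow_pascal]
      rcases Nat.lt_or_ge b n with hb | hb
      · obtain ⟨m, rfl⟩ : ∃ m, n = b + 1 + m := ⟨n - (b + 1), by omega⟩
        have e1 : b + 1 + m - (b + 1) = m := by omega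
        have e2 : b + 1 + m - b = m + 1 := by omega
        have e3 : b + 1 + m + 1 - (b + 1) = m + 1 := by omega
        rw [ih (b + 1) (by omega), ih b (by omega), e1, e2, e3]
        rw [gbProd_succ_top Q (m + 1) b, gbProd_succ_bot Q m b, gbProd_succ_top Q 0 b,
          Finset.sum_range_succ, pow_add]
        have hD : gbProd Q 0 b ≠ 0 := gbProd_ne_zero Q hQ 0 b
        have hv : (1 : K) - Q ^ (0 + 1 + b) ≠ 0 := fun h => hQ (0 + 1 + b) (by omega) (sub_eq_zero.mp h).symm
        field_simp
        ring_nf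
      · have hbn : b = n := by omega
        subst hbn
        rw [sPow_of_lt Q (Nat.lt_succ_self b), ih b le_rfl, Nat.sub_self, Nat.sub_self,
          mul_div_assoc, div_self (gbProd_ne_zero Q hQ 0 b), Finset.sum_range_succ, pow_add,
          mul_div_assoc, div_self (gbProd_ne_zero Q hQ 0 (b + 1))]
        ring

end Gauss

section PartA
variable {r s : ℕ} {lam mu : Fin r → ℕ}

lemma beta_strictAnti (h : IsRectPartition r s lam) {i j : Fin r} (hij : i < j) :
    lam j + (r - 1 - (j : ℕ)) < lam i + (r - 1 - (i : ℕ)) := by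
  have h1 : lam j ≤ lam i := h.1 i j hij.le
  have h2 : (i : ℕ) < (j : ℕ) := hij
  have h3 : (j : ℕ) < r := j.isLt
  omega

lemma beta_inj (h : IsRectPartition r s lam) :
    Function.Injective (fun i : Fin r => lam i + (r - 1 - (i : ℕ))) := by
  intro i j hij
  dsimp only at hij
  rcases lt_trichotomy i j with h' | h' | h'
  · exact absurd hij.symm (ne_of_lt (beta_strictAnti h h'))
  · exact h'
  · exact absurd hij (ne_of_lt (beta_strictAnti h h'))

lemma card_betaSet (h : IsRectPartition r s lam) : (betaSet r lam).card = r := by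
  rw [betaSet, Finset.card_image_of_injective _ (beta_inj h), Finset.card_univ,
    Fintype.card_fin]

lemma sum_fin_rev (r : ℕ) : (∑ i : Fin r, (r - 1 - (i : ℕ))) = r * (r - 1) / 2 := by
  rw [Fin.sum_univ_eq_sum_range (fun i => r - 1 - i) r, Finset.sum_range_reflect (fun i => i) r]
  exact Finset.sum_range_id r

lemma sum_betaSet (h : IsRectPartition r s lam) :
    ∑ b ∈ betaSet r lam, b = (∑ i, lam i) + r * (r - 1) / 2 := by
  rw [betaSet, Finset.sum_image (fun i _ j _ hij => beta_inj h hij), ← sum_fin_rev r,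
    ← Finset.sum_add_distrib]

lemma betaSet_subset (h : IsRectPartition r s lam) : betaSet r lam ⊆ Finset.range (r + s) := by
  intro b hb
  obtain ⟨i, _, rfl⟩ := Finset.mem_image.1 hb
  have h1 : lam i ≤ s := h.2 i
  have h2 : (i : ℕ) < r := i.isLt
  simp only [Finset.mem_range]
  omega

lemma betaSet_injective (hl : IsRectPartition r s lam) (hm : IsRectPartition r s mu)
    (h : betaSet r lam = betaSet r mu) : lam = mu := by
  have hcard : (betaSet r lam).card = r := card_betaSet hl
  have key : ∀ (nu : Fin r → ℕ), IsRectPartition r s nu → betaSet r nu = betaSet r lam →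
      (fun k : Fin r => nu k.rev + (r - 1 - ((k.rev : ℕ)))) =
        ⇑((betaSet r lam).orderEmbOfFin hcard) := by
    intro nu hnu hbeta
    apply Finset.orderEmbOfFin_unique
    · intro k; rw [← hbeta]; exact Finset.mem_image_of_mem _ (Finset.mem_univ _)
    · intro k l hkl
      exact beta_strictAnti hnu (Fin.rev_lt_rev.2 hkl)
  have h1 := key lam hl rfl
  have h2 := key mu hm h.symm
  funext i
  have e1 := congrFun h1 i.rev
  have e2 := congrFun h2 i.rev
  rw [Fin.rev_rev] at e1 e2
  omega

end PartA

lemma exists_rect_of_mem_powersetCard {r s : ℕ} (hr : 1 ≤ r) {B : Finset ℕ}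
    (hB : B ∈ Finset.powersetCard r (Finset.range (r + s))) :
    ∃ lam : Fin r → ℕ, IsRectPartition r s lam ∧ betaSet r lam = B := by
  obtain ⟨hsub, hcard⟩ := Finset.mem_powersetCard.1 hB
  set e := B.orderEmbOfFin hcard with he
  have hmem : ∀ k : Fin r, e k ∈ B := fun k => Finset.orderEmbOfFin_mem B hcard k
  have hlt : ∀ k : Fin r, e k < r + s := fun k => Finset.mem_range.1 (hsub (hmem k))
  have gap : ∀ k l : Fin r, (k : ℕ) ≤ (l : ℕ) → e k + ((l : ℕ) - (k : ℕ)) ≤ e l := by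
    intro k l hkl
    obtain ⟨d, hd⟩ : ∃ d, (l : ℕ) = (k : ℕ) + d := ⟨(l : ℕ) - (k : ℕ), by omega⟩
    clear hkl
    induction d generalizing l with
    | zero => have : k = l := Fin.ext (by omega); subst this; omega
    | succ d ih =>
      have hl' : (k : ℕ) + d < r := by have := l.isLt; omega
      have h1 := ih ⟨(k : ℕ) + d, hl'⟩ rfl
      have h2 : e ⟨(k : ℕ) + d, hl'⟩ < e l :=
        (B.orderEmbOfFin hcard).strictMono (by rw [Fin.lt_def]; simp; omega)
      simp only [Fin.val_mk] at h1
      omega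
  have zgap : ∀ k : Fin r, (k : ℕ) ≤ e k := by
    intro k
    have h := gap ⟨0, by omega⟩ k (by simp)
    simp only [Fin.val_mk, Nat.sub_zero] at h
    omega
  refine ⟨fun i => e i.rev - ((i.rev : ℕ)), ⟨⟨?_, ?_⟩, ?_⟩⟩
  · intro i j hij
    have hij' : (i : ℕ) ≤ (j : ℕ) := hij
    have h3i : (i.rev : ℕ) = r - 1 - (i : ℕ) := by rw [Fin.val_rev]; omega
    have h3j : (j.rev : ℕ) = r - 1 - (j : ℕ) := by rw [Fin.val_rev]; omega
    have h1 := gap j.rev i.rev (by omega)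
    have h2 := zgap j.rev
    dsimp only
    omega
  · intro i
    have hL : r - 1 < r := by omega
    have h1 := gap i.rev ⟨r - 1, hL⟩ (by rw [Fin.val_rev]; simp; omega)
    have h2 := hlt ⟨r - 1, hL⟩
    have h3 : (i.rev : ℕ) = r - 1 - (i : ℕ) := by rw [Fin.val_rev]; omega
    have h4 := zgap i.rev
    simp only [Fin.val_mk] at h1
    dsimp only
    omega
  · have himg : ∀ i : Fin r, (e i.rev - ((i.rev : ℕ))) + (r - 1 - (i : ℕ)) = e i.rev := by
      intro i
      have h3 : (i.rev : ℕ) = r - 1 - (i : ℕ) := by rw [Fin.val_rev]; omega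
      have h4 := zgap i.rev
      omega
    ext b
    simp only [betaSet, Finset.mem_image, Finset.mem_univ, true_and]
    constructor
    · rintro ⟨i, rfl⟩
      rw [himg i]
      exact hmem _
    · intro hb
      have : b ∈ Set.range e := by rw [he, Finset.range_orderEmbOfFin]; exact hb
      obtain ⟨k, hk⟩ := this
      exact ⟨k.rev, by rw [himg k.rev, Fin.rev_rev, hk]⟩

section PartB
variable {t i : ℕ} {B : Finset ℕ}

def resPart (t i : ℕ) (B : Finset ℕ) : Finset ℕ := (B.filter (fun b => b % t = i)).image (· / t)

lemma res_decomp {b : ℕ} (hb : b % t = i) : i + b / t * t = b := by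
  calc i + b / t * t = t * (b / t) + b % t := by rw [hb, Nat.add_comm, Nat.mul_comm]
  _ = b := Nat.div_add_mod b t

lemma mem_resPart (hi : i < t) {m : ℕ} : m ∈ resPart t i B ↔ i + m * t ∈ B := by
  simp only [resPart, Finset.mem_image, Finset.mem_filter]
  constructor
  · rintro ⟨b, ⟨hbB, hbm⟩, rfl⟩
    rwa [res_decomp hbm]
  · intro h
    refine ⟨i + m * t, ⟨h, ?_⟩, ?_⟩
    · rw [Nat.add_mul_mod_self_right, Nat.mod_eq_of_lt hi]
    · rw [Nat.add_mul_div_right _ _ (by omega : 0 < t), Nat.div_eq_of_lt hi, Nat.zero_add]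

lemma add_mul_inj (ht : 1 ≤ t) : Function.Injective (fun m => i + m * t) := by
  intro m m' h
  dsimp only at h
  exact Nat.eq_of_mul_eq_mul_right (by omega) (Nat.add_left_cancel h)

lemma card_resPart (hi : i < t) :
    (resPart t i B).card = (B.filter (fun b => b % t = i)).card := by
  apply Finset.card_image_of_injOn
  intro b hb c hc hbc
  simp only [Finset.mem_coe, Finset.mem_filter] at hb hc
  have h1 := res_decomp hb.2
  have h2 := res_decomp hc.2
  dsimp only at hbc
  rw [hbc] at h1
  exact h1.symm.trans h2

lemma filter_res_eq_image (hi : i < t) :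
    B.filter (fun b => b % t = i) = (resPart t i B).image (fun m => i + m * t) := by
  ext b
  simp only [Finset.mem_filter, Finset.mem_image]
  constructor
  · rintro ⟨hb, hbm⟩
    exact ⟨b / t, (mem_resPart hi).2 (by rwa [res_decomp hbm]), res_decomp hbm⟩
  · rintro ⟨m, hm, rfl⟩
    exact ⟨(mem_resPart hi).1 hm, by rw [Nat.add_mul_mod_self_right, Nat.mod_eq_of_lt hi]⟩

lemma sum_filter_res (hi : i < t) :
    ∑ b ∈ B.filter (fun b => b % t = i), b
      = i * (resPart t i B).card + t * ∑ m ∈ resPart t i B, m := by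
  rw [filter_res_eq_image hi,
    Finset.sum_image (fun m _ m' _ h => add_mul_inj (by omega : 1 ≤ t) h),
    Finset.sum_add_distrib, Finset.sum_const, smul_eq_mul, Finset.mul_sum]
  congr 1
  · rw [Nat.mul_comm]
  · apply Finset.sum_congr rfl
    intro m _
    rw [Nat.mul_comm]

lemma resPart_subset (hi : i < t) {N : ℕ} (hB : B ⊆ Finset.range N) :
    resPart t i B ⊆ Finset.range ((N + t - 1 - i) / t) := by
  intro m hm
  rw [mem_resPart hi] at hm
  have h1 : i + m * t < N := Finset.mem_range.1 (hB hm)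
  rw [Finset.mem_range, Nat.lt_iff_add_one_le, Nat.le_div_iff_mul_le (by omega : 0 < t)]
  have e : (m + 1) * t = m * t + t := Nat.succ_mul m t
  omega

lemma eq_biUnion_filter_res (ht : 1 ≤ t) (B : Finset ℕ) :
    B = (Finset.range t).biUnion (fun i => B.filter (fun b => b % t = i)) := by
  ext b
  simp only [Finset.mem_biUnion, Finset.mem_range, Finset.mem_filter]
  constructor
  · intro hb; exact ⟨b % t, Nat.mod_lt _ (by omega), hb, rfl⟩
  · rintro ⟨i, _, hb, _⟩; exact hb

lemma pairwiseDisjoint_filter_res (B : Finset ℕ) (t : ℕ) :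
    (↑(Finset.range t) : Set ℕ).PairwiseDisjoint
      (fun i => B.filter (fun b => b % t = i)) := by
  intro i _ j _ hij
  rw [Function.onFun]
  rw [Finset.disjoint_left]
  intro b hb hb'
  rw [Finset.mem_filter] at hb hb'
  exact hij (hb.2.symm.trans hb'.2)

end PartB

section PartC
variable {r s t : ℕ}

lemma downward_eq_range {M : Finset ℕ} (h : ∀ m, m + 1 ∈ M → m ∈ M) :
    M = Finset.range M.card := by
  have hdc : ∀ d m, m + d ∈ M → m ∈ M := by
    intro d
    induction d with
    | zero => intro m hm; simpa using hm
    | succ d ih =>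
      intro m hm
      exact ih m (h (m + d) (by rwa [← Nat.add_assoc] at hm))
  have hsub : M ⊆ Finset.range M.card := by
    intro x hx
    rw [Finset.mem_range]
    have hss : Finset.range (x + 1) ⊆ M := by
      intro y hy
      rw [Finset.mem_range] at hy
      exact hdc (x - y) y (by rw [(by omega : y + (x - y) = x)]; exact hx)
    calc x + 1 = (Finset.range (x + 1)).card := by simp
    _ ≤ M.card := Finset.card_le_card hss
  exact Finset.eq_of_subset_of_card_le hsub (by simp)

lemma resPart_beta_core {ρ : Fin r → ℕ} (hcore : IsTCore r t ρ) {i : ℕ} (hi : i < t) :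
    resPart t i (betaSet r ρ) = Finset.range (aCount r t ρ i) := by
  have hdown : ∀ m, m + 1 ∈ resPart t i (betaSet r ρ) → m ∈ resPart t i (betaSet r ρ) := by
    intro m hm
    rw [mem_resPart hi] at hm ⊢
    have e : (m + 1) * t = m * t + t := Nat.succ_mul m t
    have h1 : t ≤ i + (m + 1) * t := by omega
    have h2 := hcore _ hm h1
    rwa [(by omega : i + (m + 1) * t - t = i + m * t)] at h2
  rw [downward_eq_range hdown, card_resPart hi, aCount]

lemma filter_justification (lam : Fin r → ℕ) {i : ℕ} (hi : i < t) :
    (justification r t lam).filter (fun b => b % t = i)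
      = (Finset.range (aCount r t lam i)).image (fun m => i + m * t) := by
  ext b
  simp only [justification, Finset.mem_filter, Finset.mem_biUnion, Finset.mem_range,
    Finset.mem_image]
  constructor
  · rintro ⟨⟨i', hi', m, hm, rfl⟩, hmod⟩
    rw [Nat.add_mul_mod_self_right, Nat.mod_eq_of_lt hi'] at hmod
    subst hmod
    exact ⟨m, hm, rfl⟩
  · rintro ⟨m, hm, rfl⟩
    exact ⟨⟨i, hi, m, hm, rfl⟩, by rw [Nat.add_mul_mod_self_right, Nat.mod_eq_of_lt hi]⟩

lemma card_filter_justification (lam : Fin r → ℕ) {i : ℕ} (hi : i < t) :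
    ((justification r t lam).filter (fun b => b % t = i)).card = aCount r t lam i := by
  rw [filter_justification lam hi,
    Finset.card_image_of_injective _ (add_mul_inj (by omega : 1 ≤ t)), Finset.card_range]

lemma justification_congr {lam mu : Fin r → ℕ}
    (h : ∀ i, i < t → aCount r t lam i = aCount r t mu i) :
    justification r t lam = justification r t mu := by
  apply Finset.biUnion_congr rfl
  intro i hi
  rw [h i (Finset.mem_range.1 hi)]

lemma justification_eq_betaSet (ht : 1 ≤ t) {ρ : Fin r → ℕ} (hcore : IsTCore r t ρ) :
    justification r t ρ = betaSet r ρ := by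
  conv_rhs => rw [eq_biUnion_filter_res ht (betaSet r ρ)]
  apply Finset.biUnion_congr rfl
  intro i hi
  rw [Finset.mem_range] at hi
  rw [filter_res_eq_image hi, resPart_beta_core hcore hi]

lemma aCount_eq_of_justification_eq {lam mu : Fin r → ℕ}
    (h : justification r t lam = justification r t mu) :
    ∀ i, i < t → aCount r t lam i = aCount r t mu i := by
  intro i hi
  rw [← card_filter_justification lam hi, ← card_filter_justification mu hi, h]

end PartC

section PartD
variable {K : Type*} [Field K]

lemma filter_biUnion_res {t : ℕ} (g : Fin t → Finset ℕ) (i₀ : Fin t) :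
    (Finset.univ.biUnion fun i : Fin t => (g i).image (fun m => (i : ℕ) + m * t)).filter
        (fun b => b % t = (i₀ : ℕ))
      = (g i₀).image (fun m => (i₀ : ℕ) + m * t) := by
  ext b
  simp only [Finset.mem_filter, Finset.mem_biUnion, Finset.mem_univ, true_and, Finset.mem_image]
  constructor
  · rintro ⟨⟨i, m, hm, rfl⟩, hmod⟩
    rw [Nat.add_mul_mod_self_right, Nat.mod_eq_of_lt i.isLt] at hmod
    have : i = i₀ := Fin.ext hmod
    subst this
    exact ⟨m, hm, rfl⟩
  · rintro ⟨m, hm, rfl⟩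
    exact ⟨⟨i₀, m, hm, rfl⟩, by rw [Nat.add_mul_mod_self_right, Nat.mod_eq_of_lt i₀.isLt]⟩

lemma pairwiseDisjoint_image_res {t : ℕ} (g : Fin t → Finset ℕ) :
    ∀ x ∈ (Finset.univ : Finset (Fin t)), ∀ y ∈ Finset.univ, x ≠ y →
      Disjoint ((g x).image (fun m => (x : ℕ) + m * t))
        ((g y).image (fun m => (y : ℕ) + m * t)) := by
  intro x _ y _ hxy
  rw [Finset.disjoint_left]
  rintro b hb hb'
  simp only [Finset.mem_image] at hb hb'
  obtain ⟨m, _, rfl⟩ := hb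
  obtain ⟨m', _, h⟩ := hb'
  apply hxy
  apply Fin.ext
  have h1 : ((x : ℕ) + m * t) % t = (x : ℕ) := by
    rw [Nat.add_mul_mod_self_right, Nat.mod_eq_of_lt x.isLt]
  have h2 : ((y : ℕ) + m' * t) % t = (y : ℕ) := by
    rw [Nat.add_mul_mod_self_right, Nat.mod_eq_of_lt y.isLt]
  rw [← h1, ← h2, h]

lemma sum_over_BFin (q : K) {t : ℕ} (ht : 1 ≤ t) (N R : ℕ) (a : ℕ → ℕ)
    (hRa : ∑ i ∈ Finset.range t, a i = R) :
    ∑ B ∈ (Finset.powersetCard R (Finset.range N)).filter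
        (fun B => ∀ i, i < t → (B.filter (fun b => b % t = i)).card = a i),
      q ^ (∑ b ∈ B, b)
    = ∏ i : Fin t, ∑ S ∈ Finset.powersetCard (a (i : ℕ))
        (Finset.range ((N + t - 1 - (i : ℕ)) / t)),
        q ^ ((i : ℕ) * a (i : ℕ) + t * ∑ m ∈ S, m) := by
  rw [Finset.prod_univ_sum]
  apply Finset.sum_nbij' (fun B => fun i : Fin t => resPart t (i : ℕ) B)
    (fun g => Finset.univ.biUnion fun i : Fin t => (g i).image (fun m => (i : ℕ) + m * t))
  · -- hi
    intro B hB
    rw [Finset.mem_filter, Finset.mem_powersetCard] at hB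
    obtain ⟨⟨hsub, hcard⟩, hcount⟩ := hB
    rw [Fintype.mem_piFinset]
    intro i
    rw [Finset.mem_powersetCard]
    exact ⟨resPart_subset i.isLt hsub, (card_resPart i.isLt).trans (hcount _ i.isLt)⟩
  · -- hj
    intro g hg
    rw [Fintype.mem_piFinset] at hg
    rw [Finset.mem_filter, Finset.mem_powersetCard]
    have hcnt : ∀ i₀ : Fin t,
        ((Finset.univ.biUnion fun i : Fin t => (g i).image (fun m => (i : ℕ) + m * t)).filter
          (fun b => b % t = (i₀ : ℕ))).card = a (i₀ : ℕ) := by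
      intro i₀
      rw [filter_biUnion_res, Finset.card_image_of_injective _ (add_mul_inj ht)]
      exact (Finset.mem_powersetCard.1 (hg i₀)).2
    refine ⟨⟨?_, ?_⟩, ?_⟩
    · intro b hb
      simp only [Finset.mem_biUnion, Finset.mem_univ, true_and, Finset.mem_image] at hb
      obtain ⟨i, m, hm, rfl⟩ := hb
      have hsub := (Finset.mem_powersetCard.1 (hg i)).1
      have hmlt : m < (N + t - 1 - (i : ℕ)) / t := Finset.mem_range.1 (hsub hm)
      rw [Nat.lt_iff_add_one_le, Nat.le_div_iff_mul_le (by omega : 0 < t)] at hmlt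
      have e : (m + 1) * t = m * t + t := Nat.succ_mul m t
      have hit : (i : ℕ) < t := i.isLt
      rw [Finset.mem_range]
      omega
    · rw [Finset.card_biUnion (pairwiseDisjoint_image_res g)]
      rw [← hRa, ← Fin.sum_univ_eq_sum_range (fun i => a i) t]
      apply Finset.sum_congr rfl
      intro i _
      rw [Finset.card_image_of_injective _ (add_mul_inj ht)]
      exact (Finset.mem_powersetCard.1 (hg i)).2
    · intro i hi
      exact hcnt ⟨i, hi⟩
  · -- left_inv
    intro B hB
    ext b
    simp only [Finset.mem_biUnion, Finset.mem_univ, true_and]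
    constructor
    · rintro ⟨i, hb⟩
      rw [← filter_res_eq_image i.isLt] at hb
      exact (Finset.mem_filter.1 hb).1
    · intro hb
      have hbt : b % t < t := Nat.mod_lt _ (by omega)
      refine ⟨⟨b % t, hbt⟩, ?_⟩
      rw [← filter_res_eq_image (show ((⟨b % t, hbt⟩ : Fin t) : ℕ) < t from hbt)]
      exact Finset.mem_filter.2 ⟨hb, rfl⟩
  · -- right_inv
    intro g hg
    funext i
    ext m
    rw [mem_resPart i.isLt]
    constructor
    · intro hm
      have : (i : ℕ) + m * t ∈ (Finset.univ.biUnion fun i' : Fin t =>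
          (g i').image (fun m => (i' : ℕ) + m * t)).filter (fun b => b % t = (i : ℕ)) :=
        Finset.mem_filter.2 ⟨hm, by rw [Nat.add_mul_mod_self_right, Nat.mod_eq_of_lt i.isLt]⟩
      rw [filter_biUnion_res] at this
      obtain ⟨m', hm', hmm⟩ := Finset.mem_image.1 this
      rwa [← add_mul_inj ht hmm]
    · intro hm
      simp only [Finset.mem_biUnion, Finset.mem_univ, true_and, Finset.mem_image]
      exact ⟨i, m, hm, rfl⟩
  · -- weight
    intro B hB
    rw [Finset.mem_filter, Finset.mem_powersetCard] at hB
    obtain ⟨⟨hsub, hcard⟩, hcount⟩ := hB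
    rw [Finset.prod_pow_eq_pow_sum]
    congr 1
    conv_lhs => rw [eq_biUnion_filter_res ht B]
    rw [Finset.sum_biUnion (pairwiseDisjoint_filter_res B t),
      ← Fin.sum_univ_eq_sum_range (fun i => ∑ b ∈ B.filter (fun b => b % t = i), b) t]
    apply Finset.sum_congr rfl
    intro i _
    rw [sum_filter_res i.isLt, card_resPart i.isLt, hcount _ i.isLt]

end PartD

section GaussBinom

lemma X_pow_pow_ne_one {t : ℕ} (ht : 1 ≤ t) :
    ∀ j : ℕ, 1 ≤ j → ((RatFunc.X : RatFunc ℚ) ^ t) ^ j ≠ 1 := by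
  intro j hj h
  rw [← pow_mul, ← RatFunc.algebraMap_X, ← map_pow, ← map_one (algebraMap (Polynomial ℚ) (RatFunc ℚ))] at h
  have h2 : (Polynomial.X : Polynomial ℚ) ^ (t * j) = 1 := RatFunc.algebraMap_injective ℚ h
  have h3 := congrArg Polynomial.natDegree h2
  rw [Polynomial.natDegree_X_pow, Polynomial.natDegree_one] at h3
  rcases Nat.mul_eq_zero.1 h3 with h4 | h4 <;> omega

lemma gaussBinom_eq (Q : RatFunc ℚ) {n a : ℕ} (h : a ≤ n) :
    gaussBinom Q n a = gbProd Q (n - a) a / gbProd Q 0 a := by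
  rw [gaussBinom, Finset.prod_div_distrib]
  congr 1
  · rw [gbProd, ← Finset.Ico_add_one_right_eq_Icc, Finset.prod_Ico_eq_prod_range]
    apply Finset.prod_congr (by rw [Nat.add_sub_cancel])
    intro j _
    congr 2
    omega
  · rw [gbProd, ← Finset.Ico_add_one_right_eq_Icc, Finset.prod_Ico_eq_prod_range]
    apply Finset.prod_congr (by rw [Nat.add_sub_cancel])
    intro j _
    norm_num

lemma sPow_eq_gauss (Q : RatFunc ℚ) (hQ : ∀ j : ℕ, 1 ≤ j → Q ^ j ≠ 1) {n a : ℕ} (h : a ≤ n) :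
    sPow Q n a = Q ^ (∑ k ∈ Finset.range a, k) * gaussBinom Q n a := by
  rw [sPow_eq Q hQ n a h, gaussBinom_eq Q h, mul_div_assoc]

end GaussBinom


/-- For a `t`-core `ρ ∈ Par_{r,s}`,
`Σ_{λ ∈ Par_{r,s}, core_t(λ) = ρ} q^{|λ|} = q^{|ρ|} ∏_{i=0}^{t−1} [n_i choose a_i]_{q^t}`.
Here `core_t(λ) = ρ` is expressed as `J(λ) = β(ρ)`. -/
theorem genfun_fixed_core (r s t : ℕ) (hr : 1 ≤ r) (hs : 1 ≤ s) (ht : 2 ≤ t)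
    (ρ : Fin r → ℕ) (hρ : IsRectPartition r s ρ) (hcore : IsTCore r t ρ) :
    (∑ᶠ lam ∈ {lam : Fin r → ℕ | IsRectPartition r s lam ∧
          justification r t lam = betaSet r ρ},
        (RatFunc.X : RatFunc ℚ) ^ (∑ i, lam i)) =
      (RatFunc.X : RatFunc ℚ) ^ (∑ i, ρ i) *
        ∏ i ∈ Finset.range t,
          gaussBinom ((RatFunc.X : RatFunc ℚ) ^ t) (nres r s t i) (aCount r t ρ i) := by
  classical
  have ht1 : 1 ≤ t := by omega
  set q : RatFunc ℚ := RatFunc.X with hqdef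
  have hq : ∀ j : ℕ, 1 ≤ j → (q ^ t) ^ j ≠ 1 := X_pow_pow_ne_one ht1
  have hJρ : justification r t ρ = betaSet r ρ := justification_eq_betaSet ht1 hcore
  -- the finite version of the index set
  set P : Finset (Fin r → ℕ) := (Fintype.piFinset fun _ : Fin r => Finset.range (s + 1)).filter
      (fun lam => IsRectPartition r s lam ∧ justification r t lam = betaSet r ρ) with hP
  have hsetP : {lam : Fin r → ℕ | IsRectPartition r s lam ∧
      justification r t lam = betaSet r ρ} = ↑P := by
    ext lam
    simp only [hP, Set.mem_setOf_eq, Finset.coe_filter, Fintype.mem_piFinset, Finset.mem_range]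
    constructor
    · intro h; exact ⟨fun i => Nat.lt_succ_of_le (h.1.2 i), h⟩
    · exact fun h => h.2
  rw [hsetP, finsum_mem_coe_finset]
  -- basic facts about the counts
  have ha_le : ∀ i : ℕ, i < t → aCount r t ρ i ≤ nres r s t i := by
    intro i hi
    have h1 : resPart t i (betaSet r ρ) ⊆ Finset.range ((r + s + t - 1 - i) / t) :=
      resPart_subset hi (betaSet_subset hρ)
    calc aCount r t ρ i = (resPart t i (betaSet r ρ)).card := (card_resPart hi).symm
    _ ≤ (Finset.range ((r + s + t - 1 - i) / t)).card := Finset.card_le_card h1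
    _ = nres r s t i := by rw [Finset.card_range, nres]
  have hsum_a : ∑ i ∈ Finset.range t, aCount r t ρ i = r := by
    have h1 : (betaSet r ρ).card = r := card_betaSet hρ
    have h2 := Finset.card_biUnion (s := Finset.range t)
      (t := fun i => (betaSet r ρ).filter (fun b => b % t = i))
      (fun x hx y hy hxy =>
        pairwiseDisjoint_filter_res (betaSet r ρ) t (Finset.mem_coe.2 hx) (Finset.mem_coe.2 hy) hxy)
    rw [← eq_biUnion_filter_res ht1 (betaSet r ρ), h1] at h2
    exact h2.symm
  -- cancel q ^ (r(r-1)/2)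
  rw [← mul_left_inj' (pow_ne_zero (r * (r - 1) / 2) (RatFunc.X_ne_zero (K := ℚ)) :
    (q : RatFunc ℚ) ^ (r * (r - 1) / 2) ≠ 0)]
  -- Step I : pass to beta-sets
  have step1 : (∑ lam ∈ P, q ^ (∑ i, lam i)) * q ^ (r * (r - 1) / 2)
      = ∑ B ∈ (Finset.powersetCard r (Finset.range (r + s))).filter
          (fun B => ∀ i, i < t → (B.filter (fun b => b % t = i)).card = aCount r t ρ i),
        q ^ (∑ b ∈ B, b) := by
    rw [Finset.sum_mul]
    simp only [← pow_add]
    apply Finset.sum_bij (fun lam _ => betaSet r lam)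
    · intro lam hlam
      rw [hP, Finset.mem_filter] at hlam
      obtain ⟨-, hrect, hJ⟩ := hlam
      rw [Finset.mem_filter, Finset.mem_powersetCard]
      refine ⟨⟨betaSet_subset hrect, card_betaSet hrect⟩, ?_⟩
      intro i hi
      exact aCount_eq_of_justification_eq (hJ.trans hJρ.symm) i hi
    · intro lam1 h1 lam2 h2 heq
      rw [hP, Finset.mem_filter] at h1 h2
      exact betaSet_injective h1.2.1 h2.2.1 heq
    · intro B hB
      rw [Finset.mem_filter] at hB
      obtain ⟨hBp, hBcnt⟩ := hB
      obtain ⟨lam, hrect, hbeta⟩ := exists_rect_of_mem_powersetCard hr hBp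
      have hmem : lam ∈ P := by
        rw [hP, Finset.mem_filter, Fintype.mem_piFinset]
        refine ⟨fun i => Finset.mem_range.2 (Nat.lt_succ_of_le (hrect.2 i)), hrect, ?_⟩
        rw [← hJρ]
        apply justification_congr
        intro i hi
        rw [aCount, aCount, hbeta]
        exact hBcnt i hi
      exact ⟨lam, hmem, hbeta⟩
    · intro lam hlam
      rw [hP, Finset.mem_filter] at hlam
      rw [sum_betaSet hlam.2.1]
  rw [step1, sum_over_BFin q ht1 (r + s) r (aCount r t ρ) hsum_a]
  -- Step III : evaluate each factor
  have step3 : ∀ i : Fin t,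
      ∑ S ∈ Finset.powersetCard (aCount r t ρ (i : ℕ))
          (Finset.range ((r + s + t - 1 - (i : ℕ)) / t)),
        q ^ ((i : ℕ) * aCount r t ρ (i : ℕ) + t * ∑ m ∈ S, m)
      = (q ^ ((i : ℕ) * aCount r t ρ (i : ℕ))
          * (q ^ t) ^ (∑ k ∈ Finset.range (aCount r t ρ (i : ℕ)), k))
        * gaussBinom (q ^ t) (nres r s t (i : ℕ)) (aCount r t ρ (i : ℕ)) := by
    intro i
    rw [mul_assoc, ← sPow_eq_gauss (q ^ t) hq (ha_le (i : ℕ) i.isLt), sPow, Finset.mul_sum]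
    have hnr : nres r s t (i : ℕ) = (r + s + t - 1 - (i : ℕ)) / t := rfl
    rw [hnr]
    apply Finset.sum_congr rfl
    intro S _
    rw [pow_add]
    congr 1
    rw [pow_mul]
  rw [Finset.prod_congr rfl (fun i _ => step3 i), Finset.prod_mul_distrib]
  have step4 : (∏ i : Fin t, (q ^ ((i : ℕ) * aCount r t ρ (i : ℕ))
        * (q ^ t) ^ (∑ k ∈ Finset.range (aCount r t ρ (i : ℕ)), k)))
      = q ^ (∑ i, ρ i) * q ^ (r * (r - 1) / 2) := by
    have e1 : ∀ i : Fin t, q ^ ((i : ℕ) * aCount r t ρ (i : ℕ))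
          * (q ^ t) ^ (∑ k ∈ Finset.range (aCount r t ρ (i : ℕ)), k)
        = q ^ ((i : ℕ) * aCount r t ρ (i : ℕ)
            + t * ∑ k ∈ Finset.range (aCount r t ρ (i : ℕ)), k) := by
      intro i
      rw [pow_add]
      congr 1
      rw [pow_mul]
    rw [Finset.prod_congr rfl (fun i _ => e1 i), Finset.prod_pow_eq_pow_sum, ← pow_add]
    congr 1
    rw [Fin.sum_univ_eq_sum_range
      (fun i => i * aCount r t ρ i + t * ∑ k ∈ Finset.range (aCount r t ρ i), k) t]
    rw [← sum_betaSet hρ]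
    conv_rhs => rw [eq_biUnion_filter_res ht1 (betaSet r ρ)]
    rw [Finset.sum_biUnion (pairwiseDisjoint_filter_res (betaSet r ρ) t)]
    apply Finset.sum_congr rfl
    intro i hi
    rw [sum_filter_res (Finset.mem_range.1 hi), resPart_beta_core hcore (Finset.mem_range.1 hi),
      Finset.card_range]
  rw [step4,
    Fin.prod_univ_eq_prod_range (fun i => gaussBinom (q ^ t) (nres r s t i) (aCount r t ρ i)) t]
  ring
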